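/- With notation as in the 2-dimensional spinor setting (Σ ≅ ℂ², orthonormal basis t₁,t₂, Clifford relations, ω = i t₁•t₂, φ̄ = ω•φ, J the rotation Jt₁ = t₂, Jt₂ = −t₁), let φ ∈ Σ be a unit spinor, f = Re⟨φ, φ̄⟩, and T the vector defined by ⟨T,t₁⟩ = Re⟨i t₂•φ, φ⟩, ⟨T,t₂⟩ = −Re⟨i t₁•φ, φ⟩. Then the spinor θ := iφ − i f φ̄ + JT•φ satisfies |θ|² = 2(1 − f² − ‖T‖²)|φ|², and hence θ = 0 whenever f² + ‖T‖² = 1. -/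

import Mathlib

/-- in the 2-dimensional spinor setting, for a unit spinor `φ`, with
`f = Re⟨φ, φ̄⟩`, `T` defined by `⟨T,t₁⟩ = Re⟨i t₂•φ, φ⟩`, `⟨T,t₂⟩ = −Re⟨i t₁•φ, φ⟩`,
and `J` the rotation `Jt₁ = t₂, Jt₂ = −t₁` (so `JT•φ = T₁ t₂•φ − T₂ t₁•φ`), the spinor
`θ := iφ − i f φ̄ + JT•φ` satisfies `|θ|² = 2(1 − f² − ‖T‖²)|φ|²`; hence `θ = 0`
whenever `f² + ‖T‖² = 1`. -/
theorem stmt_12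
    {S : Type*} [NormedAddCommGroup S] [InnerProductSpace ℂ S]
    [FiniteDimensional ℂ S] (hdim : Module.finrank ℂ S = 2)
    (c1 c2 : S →ₗ[ℂ] S)
    (h11 : ∀ ψ, c1 (c1 ψ) = -ψ) (h22 : ∀ ψ, c2 (c2 ψ) = -ψ)
    (h12 : ∀ ψ, c1 (c2 ψ) + c2 (c1 ψ) = 0)
    (hskew1 : ∀ ψ χ : S, (inner ℂ (c1 ψ) χ : ℂ) = -(inner ℂ ψ (c1 χ) : ℂ))
    (hskew2 : ∀ ψ χ : S, (inner ℂ (c2 ψ) χ : ℂ) = -(inner ℂ ψ (c2 χ) : ℂ))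
    (φ : S) (hφ : ‖φ‖ = 1)
    (f T1 T2 : ℝ)
    (hf : f = (inner ℂ φ (Complex.I • c1 (c2 φ)) : ℂ).re)
    (hT1 : T1 = (inner ℂ (Complex.I • c2 φ) φ : ℂ).re)
    (hT2 : T2 = -(inner ℂ (Complex.I • c1 φ) φ : ℂ).re)
    (θ : S)
    (hθ : θ = Complex.I • φ - (Complex.I * (f : ℂ)) • (Complex.I • c1 (c2 φ))
      + (T1 • c2 φ - T2 • c1 φ)) :
    ‖θ‖ ^ 2 = 2 * (1 - f ^ 2 - (T1 ^ 2 + T2 ^ 2)) * ‖φ‖ ^ 2 ∧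
    (f ^ 2 + (T1 ^ 2 + T2 ^ 2) = 1 → θ = 0) := by
  have h12' : ∀ ψ, c2 (c1 ψ) = -c1 (c2 ψ) := fun ψ =>
    eq_neg_of_add_eq_zero_right (h12 ψ)
  -- inner ℂ preservation
  have pres1 : ∀ ψ χ : S, (inner ℂ (c1 ψ) (c1 χ) : ℂ) = inner ℂ ψ χ := by
    intro ψ χ; rw [hskew1, h11, inner_neg_right, neg_neg]
  have pres2 : ∀ ψ χ : S, (inner ℂ (c2 ψ) (c2 χ) : ℂ) = inner ℂ ψ χ := by
    intro ψ χ; rw [hskew2, h22, inner_neg_right, neg_neg]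
  have hsm : ∀ (r : ℝ) (x : S), (r : ℂ) • x = r • x := fun r x => by
    rw [← Complex.coe_algebraMap, algebraMap_smul]
  have g00 : (inner ℂ φ φ : ℂ) = 1 := by
    rw [inner_self_eq_norm_sq_to_K, hφ]; norm_num
  -- Gram entries
  have g01 : (inner ℂ φ (c1 φ) : ℂ) = (T2 : ℂ) * Complex.I := by
    have hconj : (starRingEnd ℂ) (inner ℂ φ (c1 φ) : ℂ) = -(inner ℂ φ (c1 φ) : ℂ) := by
      rw [inner_conj_symm, hskew1]
    have hre : (inner ℂ φ (c1 φ) : ℂ).re = 0 := by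
      have h2 := congrArg Complex.re hconj
      rw [Complex.conj_re, Complex.neg_re] at h2
      linarith
    have him : (inner ℂ φ (c1 φ) : ℂ).im = T2 := by
      rw [hT2, inner_smul_left]
      simp [hskew1]
    apply Complex.ext <;> simp [hre, him]
  have g02 : (inner ℂ φ (c2 φ) : ℂ) = -(T1 : ℂ) * Complex.I := by
    have hconj : (starRingEnd ℂ) (inner ℂ φ (c2 φ) : ℂ) = -(inner ℂ φ (c2 φ) : ℂ) := by
      rw [inner_conj_symm, hskew2]
    have hre : (inner ℂ φ (c2 φ) : ℂ).re = 0 := by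
      have h2 := congrArg Complex.re hconj
      rw [Complex.conj_re, Complex.neg_re] at h2
      linarith
    have him : (inner ℂ φ (c2 φ) : ℂ).im = -T1 := by
      rw [hT1, inner_smul_left]
      simp [hskew2]
    apply Complex.ext <;> simp [hre, him]
  have g0w : (inner ℂ φ (c1 (c2 φ)) : ℂ) = -(f : ℂ) * Complex.I := by
    have hconj : (starRingEnd ℂ) (inner ℂ φ (c1 (c2 φ)) : ℂ) = -(inner ℂ φ (c1 (c2 φ)) : ℂ) := by
      rw [inner_conj_symm, hskew1, hskew2, h12']
      simp
    have hre : (inner ℂ φ (c1 (c2 φ)) : ℂ).re = 0 := by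
      have h2 := congrArg Complex.re hconj
      rw [Complex.conj_re, Complex.neg_re] at h2
      linarith
    have him : (inner ℂ φ (c1 (c2 φ)) : ℂ).im = -f := by
      rw [hf, inner_smul_right]
      simp [hre]
    apply Complex.ext <;> simp [hre, him]
  have g12 : (inner ℂ (c1 φ) (c2 φ) : ℂ) = (f : ℂ) * Complex.I := by
    rw [hskew1, g0w]; ring
  have g1w : (inner ℂ (c1 φ) (c1 (c2 φ)) : ℂ) = -(T1 : ℂ) * Complex.I := by
    rw [pres1, g02]
  have g2w : (inner ℂ (c2 φ) (c1 (c2 φ)) : ℂ) = -(T2 : ℂ) * Complex.I := by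
    have hc : c2 (c1 (c2 φ)) = c1 φ := by rw [h12', h22]; simp
    rw [hskew2, hc, g01]; ring
  have g11 : (inner ℂ (c1 φ) (c1 φ) : ℂ) = 1 := by rw [pres1, g00]
  have g22 : (inner ℂ (c2 φ) (c2 φ) : ℂ) = 1 := by rw [pres2, g00]
  have gww : (inner ℂ (c1 (c2 φ)) (c1 (c2 φ)) : ℂ) = 1 := by rw [pres1, pres2, g00]
  have e10 : (inner ℂ (c1 φ) φ : ℂ) = -((T2 : ℂ) * Complex.I) := by
    rw [hskew1, g01]
  have e20 : (inner ℂ (c2 φ) φ : ℂ) = (T1 : ℂ) * Complex.I := by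
    rw [hskew2, g02]; ring
  have e21 : (inner ℂ (c2 φ) (c1 φ) : ℂ) = -((f : ℂ) * Complex.I) := by
    rw [hskew2, h12', inner_neg_right, g0w]; ring
  have ew0 : (inner ℂ (c1 (c2 φ)) φ : ℂ) = (f : ℂ) * Complex.I := by
    rw [hskew1, hskew2, h12', inner_neg_right, g0w]; ring
  have ew1 : (inner ℂ (c1 (c2 φ)) (c1 φ) : ℂ) = (T1 : ℂ) * Complex.I := by
    rw [pres1, e20]
  have ew2 : (inner ℂ (c1 (c2 φ)) (c2 φ) : ℂ) = (T2 : ℂ) * Complex.I := by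
    rw [hskew1, g2w]; ring
  -- key identity from vanishing Gram determinant (dim = 2 < 3)
  set v : Fin 3 → S := ![φ, c1 φ, c2 φ] with hv
  have hdep : ¬ LinearIndependent ℂ v := fun h => by
    simpa [hdim] using h.fintype_card_le_finrank
  obtain ⟨g, hsum, i0, hi0⟩ := Fintype.not_linearIndependent_iff.mp hdep
  set M : Matrix (Fin 3) (Fin 3) ℂ :=
    Matrix.of (fun i j => (inner ℂ (v i) (v j) : ℂ)) with hM
  have hmul : M.mulVec g = 0 := by
    funext i
    have : ∑ j, g j • v j = 0 := hsum
    calc M.mulVec g i = ∑ j, (inner ℂ (v i) (g j • v j) : ℂ) := by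
          simp [Matrix.mulVec, dotProduct, hM, inner_smul_right, mul_comm]
      _ = (inner ℂ (v i) (∑ j, g j • v j) : ℂ) := (inner_sum _ _ _).symm
      _ = 0 := by rw [this, inner_zero_right]
  have hdet : M.det = 0 := by
    apply Matrix.exists_mulVec_eq_zero_iff.mp
    exact ⟨g, Function.ne_iff.mpr ⟨i0, hi0⟩, hmul⟩
  have key : f ^ 2 + (T1 ^ 2 + T2 ^ 2) = 1 := by
    rw [Matrix.det_fin_three] at hdet
    simp only [hM, hv, Matrix.of_apply, Matrix.cons_val', Matrix.cons_val_zero,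
      Matrix.cons_val_one, Matrix.head_cons, Matrix.cons_val_two, Matrix.tail_cons,
      Matrix.empty_val', Matrix.cons_val_fin_one, Matrix.head_fin_const,
      g00, g01, g02, g12, e10, e20, e21, g11, g22] at hdet
    have : ((1 - f ^ 2 - T1 ^ 2 - T2 ^ 2 : ℝ) : ℂ) = 0 := by
      push_cast
      linear_combination hdet - ((f:ℂ)^2 + (T1:ℂ)^2 + (T2:ℂ)^2) * Complex.I_mul_I
    have := Complex.ofReal_eq_zero.mp this
    linarith
  -- norm computation
  have hθ' : θ = Complex.I • φ + (f • c1 (c2 φ) + (T1 • c2 φ - T2 • c1 φ)) := by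
    have hIfI : Complex.I * (f:ℂ) * Complex.I = -(f:ℂ) := by
      rw [mul_comm Complex.I ((f:ℂ)), mul_assoc, Complex.I_mul_I]; ring
    rw [hθ, smul_smul, hIfI, neg_smul, sub_neg_eq_add, hsm]
    abel
  have hip : (inner ℂ θ θ : ℂ) = ((1 - f ^ 2 - T1 ^ 2 - T2 ^ 2 : ℝ) : ℂ) := by
    rw [hθ']
    simp only [← hsm]
    simp only [inner_add_left, inner_add_right, inner_sub_left, inner_sub_right,
      inner_smul_left, inner_smul_right, g00, g01, g02, g0w, g12, g1w, g2w, g11, g22, gww,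
      e10, e20, e21, ew0, ew1, ew2, Complex.conj_I, Complex.conj_ofReal]
    push_cast
    linear_combination (2*((f:ℂ)^2 + (T1:ℂ)^2 + (T2:ℂ)^2) - 1) * Complex.I_mul_I
  have hnorm : ‖θ‖ ^ 2 = 1 - f ^ 2 - T1 ^ 2 - T2 ^ 2 := by
    have h := inner_self_eq_norm_sq (𝕜 := ℂ) (E := S) θ
    rw [hip] at h
    simpa [← Complex.ofReal_pow] using h.symm
  constructor
  · rw [hnorm, hφ]
    nlinarith [key]
  · intro _
    have : ‖θ‖ ^ 2 = 0 := by rw [hnorm]; linarith [key]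
    have : ‖θ‖ = 0 := by nlinarith [norm_nonneg θ]
    exact norm_eq_zero.mp this
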